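/- arXiv:2406.01041 — 2 statements merged into one kernel-verified Lean document; each statement's English description precedes it below -/
import Mathlib

section
/- If D := ∩_{i=1}^m Fix J_i is nonempty, then F_i = D for every i, and the set of cycles Z equals {(z, z, ..., z) : z ∈ D} = D^m ∩ Δ, where Δ is the diagonal of X^m. -/
open Pointwise InnerProductSpace

variable {X : Type*} [NormedAddCommGroup X] [InnerProductSpace ℝ X]
variable {m : ℕ} [NeZero m]

/-- A set-valued operator `A : X ⇉ X` is monotone. -/
def SVMonotone (A : X → Set X) : Prop :=
  ∀ ⦃x y u v : X⦄, u ∈ A x → v ∈ A y → 0 ≤ ⟪x - y, u - v⟫_ℝ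

/-- A set-valued operator is maximally monotone. -/
def SVMaxMonotone (A : X → Set X) : Prop :=
  SVMonotone A ∧ ∀ x u : X, (∀ y v, v ∈ A y → 0 ≤ ⟪x - y, u - v⟫_ℝ) → u ∈ A x

/-- `J` is the (single-valued, full-domain) resolvent `(Id + A)⁻¹` of `A`. -/
def IsResolventOf (J : X → X) (A : X → Set X) : Prop :=
  ∀ x y : X, J y = x ↔ y - x ∈ A x

open Fin.NatCast in
/-- The cyclic composition `J_i ∘ J_{i-1} ∘ ⋯ ∘ J_1 ∘ J_m ∘ ⋯ ∘ J_{i+1}`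
(indices understood cyclically in `Fin m`, `0`-based). -/
def cyclicComp (J : Fin m → X → X) (i : Fin m) : X → X :=
  fun x => (List.range m).foldl (fun y k => J (i + 1 + (k : Fin m)) y) x

/-- `F i` : the fixed point set of the cyclic composition ending with `J i`. -/
def cycFix (J : Fin m → X → X) (i : Fin m) : Set X :=
  {x | cyclicComp J i x = x}

/-- `(z_1, …, z_m)` is a cycle: `z_{i} = J_i z_{i-1}` cyclically. -/
def IsCycle (J : Fin m → X → X) (z : Fin m → X) : Prop :=
  ∀ i : Fin m, z i = J i (z (i - 1))

/-- The circular right-shift operator on `X^m`. -/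
def shiftR (z : Fin m → X) : Fin m → X := fun i => z (i - 1)

/-- The coordinatewise resolvent `J_A` on `X^m`. -/
def resProd (J : Fin m → X → X) (z : Fin m → X) : Fin m → X := fun i => J i (z i)

/-- The product operator `A = A_1 × ⋯ × A_m` on `X^m`. -/
def prodOp (A : Fin m → X → Set X) : (Fin m → X) → Set (Fin m → X) :=
  fun z => {u | ∀ i, u i ∈ A i (z i)}

/-- The set of cycles `Z = Fix (J_A ∘ R)`. -/
def cycleSet (J : Fin m → X → X) : Set (Fin m → X) :=
  {z | resProd J (shiftR z) = z}

open Fin.NatCast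

section Aux

set_option linter.unusedSectionVars false

/-- Resolvents of monotone operators are firmly nonexpansive. -/
theorem res_firm' {J : X → X} {A : X → Set X} (hA : SVMonotone A)
    (hJ : IsResolventOf J A) (x y : X) :
    ‖J x - J y‖ ^ 2 ≤ ⟪J x - J y, x - y⟫_ℝ := by
  have hx : x - J x ∈ A (J x) := (hJ (J x) x).mp rfl
  have hy : y - J y ∈ A (J y) := (hJ (J y) y).mp rfl
  have h := hA hx hy
  have e : (x - J x) - (y - J y) = (x - y) - (J x - J y) := by abel
  rw [e, inner_sub_right, real_inner_self_eq_norm_sq] at h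
  linarith

theorem res_step' {J : X → X} {A : X → Set X} (hA : SVMonotone A)
    (hJ : IsResolventOf J A) {d : X} (hd : J d = d) (x : X) :
    ‖J x - x‖ ^ 2 ≤ ‖x - d‖ ^ 2 - ‖J x - d‖ ^ 2 := by
  have h := res_firm' hA hJ x d
  rw [hd] at h
  have e : J x - x = (J x - d) - (x - d) := by abel
  rw [e, norm_sub_sq_real]
  linarith

theorem res_nonexp_d' {J : X → X} {A : X → Set X} (hA : SVMonotone A)
    (hJ : IsResolventOf J A) {d : X} (hd : J d = d) (x : X) :
    ‖J x - d‖ ≤ ‖x - d‖ := by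
  have h := res_step' hA hJ hd x
  nlinarith [sq_nonneg ‖J x - x‖, norm_nonneg (J x - d), norm_nonneg (x - d)]

theorem foldl_fix_of_all' {ι : Type*} {f : ι → X → X} :
    ∀ (l : List ι) (x : X), (∀ k ∈ l, f k x = x) →
      l.foldl (fun y k => f k y) x = x := by
  intro l
  induction l with
  | nil => intro x _; rfl
  | cons a l ih =>
      intro x h
      have ha : f a x = x := h a List.mem_cons_self
      simp only [List.foldl_cons, ha]
      exact ih x fun k hk => h k (List.mem_cons_of_mem a hk)

theorem foldl_nonexp' {ι : Type*} {f : ι → X → X} {d : X}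
    (hne : ∀ k (x : X), ‖f k x - d‖ ≤ ‖x - d‖) :
    ∀ (l : List ι) (x : X), ‖l.foldl (fun y k => f k y) x - d‖ ≤ ‖x - d‖ := by
  intro l
  induction l with
  | nil => intro x; simp
  | cons a l ih =>
      intro x
      simp only [List.foldl_cons]
      exact le_trans (ih (f a x)) (hne a x)

theorem foldl_fix_each' {ι : Type*} {f : ι → X → X} {d : X}
    (hstep : ∀ k (x : X), ‖f k x - x‖ ^ 2 ≤ ‖x - d‖ ^ 2 - ‖f k x - d‖ ^ 2)
    (hne : ∀ k (x : X), ‖f k x - d‖ ≤ ‖x - d‖) :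
    ∀ (l : List ι) (x : X), l.foldl (fun y k => f k y) x = x →
      ∀ k ∈ l, f k x = x := by
  intro l
  induction l with
  | nil => intro x _ k hk; exact absurd hk List.not_mem_nil
  | cons a l ih =>
      intro x h k hk
      simp only [List.foldl_cons] at h
      have h1 : ‖x - d‖ ≤ ‖f a x - d‖ := by
        calc ‖x - d‖ = ‖l.foldl (fun y k => f k y) (f a x) - d‖ := by rw [h]
        _ ≤ ‖f a x - d‖ := foldl_nonexp' hne l (f a x)
      have h2 : ‖f a x - d‖ ≤ ‖x - d‖ := hne a x
      have h3 := hstep a x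
      have h4 : ‖f a x - x‖ = 0 := by
        nlinarith [norm_nonneg (f a x - x), norm_nonneg (x - d), norm_nonneg (f a x - d)]
      have ha : f a x = x := by rwa [norm_eq_zero, sub_eq_zero] at h4
      rw [ha] at h
      rcases List.mem_cons.mp hk with hk | hk
      · rw [hk]; exact ha
      · exact ih x h k hk

theorem all_eq_of_shift' {z : Fin m → X} (h : ∀ i : Fin m, z i = z (i - 1)) :
    ∀ i : Fin m, z i = z 0 := by
  have key : ∀ n : ℕ, z (n : Fin m) = z 0 := by
    intro n
    induction n with
    | zero => simp
    | succ n ih =>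
        have e : ((n + 1 : ℕ) : Fin m) = (n : Fin m) + 1 := by push_cast; ring
        rw [e]
        have h2 := h ((n : Fin m) + 1)
        rw [add_sub_cancel_right] at h2
        rw [h2, ih]
  intro i
  have := key i.val
  rwa [Fin.cast_val_eq_self] at this

theorem cyclicComp_eq' (J : Fin m → X → X) (i : Fin m) (x : X) :
    cyclicComp J i x = List.foldl (fun y (k : Fin m) => J (i + 1 + k) y) x
      ((List.range m).map (Nat.cast : ℕ → Fin m)) := by
  unfold cyclicComp
  simp
  induction (List.range m) generalizing x with
  | nil => rfl
  | cons a l ih =>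
      simp only [List.flatMap_cons, List.singleton_append, List.foldl_cons]
      exact ih _

end Aux

/-- If `D = ⋂ Fix J_i` is nonempty then every `F_i = D` and the set of cycles is
the set of constant (diagonal) tuples with value in `D`, i.e. `Z = D^m ∩ Δ`. -/
theorem cycFix_eq_and_cycleSet_diagonal
    (A : Fin m → X → Set X) (J : Fin m → X → X)
    (hA : ∀ i, SVMaxMonotone (A i)) (hJ : ∀ i, IsResolventOf (J i) (A i))
    (hD : (⋂ i : Fin m, {x : X | J i x = x}).Nonempty) :
    (∀ i : Fin m, cycFix J i = ⋂ i : Fin m, {x : X | J i x = x}) ∧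
    cycleSet J = {z : Fin m → X | ∃ x ∈ ⋂ i : Fin m, {x : X | J i x = x}, z = fun _ => x} ∧
    cycleSet J =
      {z : Fin m → X | ∀ i, z i ∈ ⋂ i : Fin m, {x : X | J i x = x}} ∩
        {z : Fin m → X | ∀ i j, z i = z j} := by
  obtain ⟨d, hd⟩ := hD
  have hdi : ∀ i : Fin m, J i d = d := fun i => Set.mem_iInter.mp hd i
  have hstep : ∀ (i : Fin m) (x : X), ‖J i x - x‖ ^ 2 ≤ ‖x - d‖ ^ 2 - ‖J i x - d‖ ^ 2 :=
    fun i x => res_step' (hA i).1 (hJ i) (hdi i) x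
  have hne : ∀ (i : Fin m) (x : X), ‖J i x - d‖ ≤ ‖x - d‖ :=
    fun i x => res_nonexp_d' (hA i).1 (hJ i) (hdi i) x
  -- the cycle argument, shared by parts 2 and 3
  have cyc : ∀ z ∈ cycleSet J, ∀ i : Fin m, z i = z 0 := by
    intro z hz
    have hzi : ∀ i : Fin m, J i (z (i - 1)) = z i := fun i => congrFun hz i
    have hterm : ∀ i : Fin m, ‖z i - z (i - 1)‖ ^ 2 ≤ ‖z (i - 1) - d‖ ^ 2 - ‖z i - d‖ ^ 2 := by
      intro i
      have := hstep i (z (i - 1))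
      rwa [hzi i] at this
    have hsum : ∑ i : Fin m, ‖z i - z (i - 1)‖ ^ 2 ≤ 0 := by
      calc ∑ i : Fin m, ‖z i - z (i - 1)‖ ^ 2
          ≤ ∑ i : Fin m, (‖z (i - 1) - d‖ ^ 2 - ‖z i - d‖ ^ 2) :=
            Finset.sum_le_sum fun i _ => hterm i
        _ = 0 := by
            rw [Finset.sum_sub_distrib]
            rw [Fintype.sum_equiv (Equiv.subRight (1 : Fin m))
              (fun i => ‖z (i - 1) - d‖ ^ 2) (fun j => ‖z j - d‖ ^ 2) (fun i => rfl)]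
            ring
    have hzero : ∀ i : Fin m, z i = z (i - 1) := by
      intro i
      have hs0 : ∑ i : Fin m, ‖z i - z (i - 1)‖ ^ 2 = 0 :=
        le_antisymm hsum (Finset.sum_nonneg fun i _ => sq_nonneg _)
      have h0 := (Finset.sum_eq_zero_iff_of_nonneg fun i _ => sq_nonneg _).mp hs0 i
        (Finset.mem_univ i)
      have hn : ‖z i - z (i - 1)‖ = 0 := sq_eq_zero_iff.mp h0
      rwa [norm_eq_zero, sub_eq_zero] at hn
    exact all_eq_of_shift' hzero
  have cycD : ∀ z ∈ cycleSet J, z 0 ∈ ⋂ i : Fin m, {x : X | J i x = x} := by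
    intro z hz
    have hzi : ∀ i : Fin m, J i (z (i - 1)) = z i := fun i => congrFun hz i
    apply Set.mem_iInter.mpr
    intro j
    have hj := hzi j
    rw [cyc z hz (j - 1), cyc z hz j] at hj
    exact hj
  have cycBack : ∀ x ∈ ⋂ i : Fin m, {x : X | J i x = x}, (fun _ : Fin m => x) ∈ cycleSet J := by
    intro x hx
    funext i
    exact Set.mem_iInter.mp hx i
  refine ⟨?_, ?_, ?_⟩
  · -- Part 1
    intro i
    ext x
    have hmem : ∀ j : Fin m, j ∈ (List.range m).map (Nat.cast : ℕ → Fin m) := by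
      intro j
      exact List.mem_map.mpr ⟨j.val, List.mem_range.mpr j.isLt, Fin.cast_val_eq_self j⟩
    constructor
    · intro hx
      have hx0 : List.foldl (fun y (k : Fin m) => J (i + 1 + k) y) x
          ((List.range m).map (Nat.cast : ℕ → Fin m)) = x := by
        rw [← cyclicComp_eq']; exact hx
      have hall := foldl_fix_each' (f := fun k : Fin m => J (i + 1 + k)) (d := d)
        (fun k y => hstep _ y) (fun k y => hne _ y) _ x hx0
      apply Set.mem_iInter.mpr
      intro j
      have h2 : J (i + 1 + (j - (i + 1))) x = x := hall (j - (i + 1)) (hmem _)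
      have e : i + 1 + (j - (i + 1)) = j := by abel
      rwa [e] at h2
    · intro hx
      have hx' : ∀ j : Fin m, J j x = x := fun j => Set.mem_iInter.mp hx j
      show cyclicComp J i x = x
      rw [cyclicComp_eq']
      exact foldl_fix_of_all' (f := fun k : Fin m => J (i + 1 + k)) _ x (fun k _ => hx' _)
  · -- Part 2
    ext z
    constructor
    · intro hz
      exact ⟨z 0, cycD z hz, funext fun i => cyc z hz i⟩
    · rintro ⟨x, hx, rfl⟩
      exact cycBack x hx
  · -- Part 3
    ext z
    constructor
    · intro hz
      constructor
      · intro i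
        rw [cyc z hz i]
        exact cycD z hz
      · intro i j
        rw [cyc z hz i, cyc z hz j]
    · rintro ⟨h1, h2⟩
      funext i
      show J i (z (i - 1)) = z i
      rw [h2 (i - 1) i]
      exact Set.mem_iInter.mp (h1 i) i
end

section
/- The dual solution set of the pair (A, Id − R) equals (R − Id)(Z): if Z ≠ ∅ then dsol(A, Id−R) is the singleton {J_{2(A^{−1} + N_{Δ^⊥} + T)}(0)}, and if Z = ∅ then dsol(A, Id−R) = ∅. In particular, for every cycle z ∈ Z, the gap vector y = Rz − z is the same. -/
open Pointwise InnerProductSpace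

variable {X : Type*} [NormedAddCommGroup X] [InnerProductSpace ℝ X]
variable {m : ℕ} [NeZero m]

/-- The canonical inner product on the Hilbert product space `X^m`. -/
def innerP (u v : Fin m → X) : ℝ := ∑ i, ⟪u i, v i⟫_ℝ

/-- Monotonicity of a set-valued operator on the product space `X^m`. -/
def SVMonotoneP (Ap : (Fin m → X) → Set (Fin m → X)) : Prop :=
  ∀ ⦃z w u v : Fin m → X⦄, u ∈ Ap z → v ∈ Ap w → 0 ≤ innerP (z - w) (u - v)

/-- Maximal monotonicity on the product space `X^m`. -/
def SVMaxMonotoneP (Ap : (Fin m → X) → Set (Fin m → X)) : Prop :=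
  SVMonotoneP Ap ∧
    ∀ z u : Fin m → X, (∀ w v, v ∈ Ap w → 0 ≤ innerP (z - w) (u - v)) → u ∈ Ap z

/-- Set-valued inverse on the product space. -/
def SVInvP (Ap : (Fin m → X) → Set (Fin m → X)) : (Fin m → X) → Set (Fin m → X) :=
  fun u => {z | u ∈ Ap z}

/-- The diagonal `Δ` of `X^m`. -/
def diagP : Set (Fin m → X) := {z | ∀ i j, z i = z j}

/-- The orthogonal complement `Δ^⊥` of the diagonal in the product Hilbert space. -/
def diagPerp : Set (Fin m → X) :=
  {y : Fin m → X | ∀ z ∈ diagP (X := X) (m := m), innerP y z = 0}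

/-- The normal cone operator of a set `C ⊆ X^m`. -/
def normalConeP (C : Set (Fin m → X)) : (Fin m → X) → Set (Fin m → X) :=
  fun x => {u | x ∈ C ∧ ∀ w ∈ C, innerP u (w - x) ≤ 0}

lemma mem_cycleSet_iff (A : Fin m → X → Set X) (J : Fin m → X → X)
    (hJ : ∀ i, IsResolventOf (J i) (A i)) (z : Fin m → X) :
    z ∈ cycleSet J ↔ ∀ i, z (i - 1) - z i ∈ A i (z i) := by
  constructor
  · intro hz i
    have := congrFun hz i
    simp only [resProd, shiftR] at this
    exact ((hJ i) (z i) (z (i - 1))).mp this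
  · intro h
    funext i
    exact ((hJ i) (z i) (z (i - 1))).mpr (h i)

lemma innerP_shift (d : Fin m → X) :
    innerP (shiftR d) (shiftR d) = innerP d d := by
  unfold innerP shiftR
  exact Fintype.sum_equiv (Equiv.subRight (1 : Fin m)) _ _ (fun i => rfl)

lemma gap_unique (A : Fin m → X → Set X) (J : Fin m → X → X)
    (hA : SVMonotoneP (prodOp A)) (hJ : ∀ i, IsResolventOf (J i) (A i)) :
    ∀ z ∈ cycleSet J, ∀ w ∈ cycleSet J, shiftR z - z = shiftR w - w := by
  intro z hz w hw
  have hz' := (mem_cycleSet_iff A J hJ z).mp hz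
  have hw' := (mem_cycleSet_iff A J hJ w).mp hw
  have hu : shiftR z - z ∈ prodOp A z := fun i => hz' i
  have hv : shiftR w - w ∈ prodOp A w := fun i => hw' i
  have hmono : 0 ≤ innerP (z - w) (shiftR z - z - (shiftR w - w)) := hA hu hv
  set d : Fin m → X := z - w with hd
  have hsd : shiftR z - z - (shiftR w - w) = shiftR d - d := by
    funext i; simp [shiftR, hd]; abel
  rw [hsd] at hmono
  -- innerP (shiftR d - d) (shiftR d - d) = -2 * innerP d (shiftR d - d)
  have key : innerP (shiftR d - d) (shiftR d - d) = -2 * innerP d (shiftR d - d) := by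
    have h1 : innerP (shiftR d - d) (shiftR d - d)
        = innerP (shiftR d) (shiftR d) - 2 * innerP (shiftR d) d + innerP d d := by
      unfold innerP
      have he : ∀ i : Fin m, ⟪(shiftR d - d) i, (shiftR d - d) i⟫_ℝ =
          ⟪shiftR d i, shiftR d i⟫_ℝ - 2 * ⟪shiftR d i, d i⟫_ℝ + ⟪d i, d i⟫_ℝ := by
        intro i
        simp only [Pi.sub_apply]
        rw [real_inner_sub_sub_self]
      simp only [he, Finset.sum_add_distrib, Finset.sum_sub_distrib, ← Finset.mul_sum]
    have h2 : innerP d (shiftR d - d) = innerP (shiftR d) d - innerP d d := by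
      unfold innerP
      rw [← Finset.sum_sub_distrib]
      refine Finset.sum_congr rfl fun i _ => ?_
      simp only [Pi.sub_apply]
      rw [inner_sub_right, real_inner_comm (d i) (shiftR d i)]
    rw [h1, h2, innerP_shift]; ring
  have hself : innerP (shiftR d - d) (shiftR d - d) = 0 := by
    have h1 : innerP (shiftR d - d) (shiftR d - d) ≤ 0 := by
      rw [key]; linarith
    have h2 : 0 ≤ innerP (shiftR d - d) (shiftR d - d) := by
      unfold innerP
      exact Finset.sum_nonneg fun i _ => real_inner_self_nonneg
    linarith
  have hzero : shiftR d - d = 0 := by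
    funext i
    have := (Finset.sum_eq_zero_iff_of_nonneg
      (fun i _ => (real_inner_self_nonneg : (0:ℝ) ≤ ⟪(shiftR d - d) i, (shiftR d - d) i⟫_ℝ))).mp
      hself i (Finset.mem_univ i)
    exact inner_self_eq_zero.mp this
  rw [← hsd] at hzero
  exact sub_eq_zero.mp hzero

/-- `dsol (A, Id − R) = (R − Id) Z`; it is the singleton
`{J_{2(A⁻¹ + N_{Δ^⊥} + T)} 0}` when `Z ≠ ∅` and empty when `Z = ∅`.
In particular the gap vector `R z − z` is independent of the cycle `z ∈ Z`. -/
theorem dsol_displacement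
    (A : Fin m → X → Set X) (J : Fin m → X → X) (T : (Fin m → X) → (Fin m → X))
    (y₀ : Fin m → X)
    (hA : SVMaxMonotoneP (prodOp A)) (hJ : ∀ i, IsResolventOf (J i) (A i))
    -- the inverse displacement identity `(Id − R)⁻¹ = N_{Δ^⊥} + (1/2) Id + T`
    (hT : SVInvP (fun z => ({z - shiftR z} : Set (Fin m → X))) =
      fun y => normalConeP diagPerp y + ({(2 : ℝ)⁻¹ • y + T y} : Set (Fin m → X)))
    -- `y₀ = J_{2(A⁻¹ + N_{Δ^⊥} + T)} (0)`
    (hy₀ : -y₀ ∈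
      (2 : ℝ) • (SVInvP (prodOp A) y₀ + normalConeP diagPerp y₀ +
        ({T y₀} : Set (Fin m → X)))) :
    {y : Fin m → X |
        (0 : Fin m → X) ∈ SVInvP (prodOp A) y +
          SVInvP (fun z => ({z - shiftR z} : Set (Fin m → X))) y} =
      (fun z => shiftR z - z) '' cycleSet J ∧
    ((cycleSet J).Nonempty →
      {y : Fin m → X |
          (0 : Fin m → X) ∈ SVInvP (prodOp A) y +
            SVInvP (fun z => ({z - shiftR z} : Set (Fin m → X))) y} = {y₀}) ∧
    (cycleSet J = ∅ →
      {y : Fin m → X |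
          (0 : Fin m → X) ∈ SVInvP (prodOp A) y +
            SVInvP (fun z => ({z - shiftR z} : Set (Fin m → X))) y} = ∅) ∧
    (∀ z ∈ cycleSet J, ∀ w ∈ cycleSet J, shiftR z - z = shiftR w - w) := by
  have hgap := gap_unique A J hA.1 hJ
  -- first claim
  have hmain : {y : Fin m → X |
        (0 : Fin m → X) ∈ SVInvP (prodOp A) y +
          SVInvP (fun z => ({z - shiftR z} : Set (Fin m → X))) y} =
      (fun z => shiftR z - z) '' cycleSet J := by
    ext y
    simp only [Set.mem_setOf_eq, Set.mem_image]
    constructor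
    · rintro h
      rw [Set.mem_add] at h
      obtain ⟨a, ha, b, hb, hab⟩ := h
      simp only [SVInvP, Set.mem_setOf_eq, Set.mem_singleton_iff] at ha hb
      have hba : b = -a := by
        have : a + b = 0 := hab
        linear_combination (norm := abel) this
      have hy : y = shiftR a - a := by
        rw [hb, hba]; funext i; simp [shiftR]; abel
      refine ⟨a, ?_, hy.symm⟩
      rw [mem_cycleSet_iff A J hJ]
      intro i
      have := ha i
      have hyi : y i = a (i - 1) - a i := by rw [hy]; simp [shiftR]
      rwa [hyi] at this
    · rintro ⟨z, hz, rfl⟩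
      rw [Set.mem_add]
      refine ⟨z, ?_, -z, ?_, by abel⟩
      · intro i
        exact (mem_cycleSet_iff A J hJ z).mp hz i
      · simp only [SVInvP, Set.mem_setOf_eq, Set.mem_singleton_iff]
        funext i; simp [shiftR]; abel
  -- y₀ is a dual solution
  have hy₀mem : (0 : Fin m → X) ∈ SVInvP (prodOp A) y₀ +
      SVInvP (fun z => ({z - shiftR z} : Set (Fin m → X))) y₀ := by
    rw [Set.mem_smul_set] at hy₀
    obtain ⟨s, hs, hsy⟩ := hy₀
    rw [Set.mem_add] at hs
    obtain ⟨ant, hant, t, ht, hants⟩ := hs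
    rw [Set.mem_add] at hant
    obtain ⟨a, ha, n, hn, han⟩ := hant
    rw [Set.mem_singleton_iff] at ht
    subst ht
    -- s = a + n + T y₀, -y₀ = 2 • s
    have hs2 : a + n + T y₀ = s := by rw [← hants, han]
    have hneg : -a = n + ((2 : ℝ)⁻¹ • y₀ + T y₀) := by
      have hsy' : s = -((2 : ℝ)⁻¹ • y₀) := by
        have h := congrArg (fun v => (2 : ℝ)⁻¹ • v) hsy
        simpa [smul_smul, smul_neg, show (2 : ℝ)⁻¹ * 2 = 1 by norm_num] using h
      rw [hsy'] at hs2
      funext i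
      have hi := congrFun hs2 i
      simp only [Pi.add_apply, Pi.neg_apply, Pi.smul_apply] at hi ⊢
      linear_combination (norm := module) -hi
    have hmemT : -a ∈ SVInvP
        (fun z => ({z - shiftR z} : Set (Fin m → X))) y₀ := by
      have := congrFun hT y₀
      rw [this, Set.mem_add]
      exact ⟨n, hn, (2 : ℝ)⁻¹ • y₀ + T y₀, rfl, hneg.symm⟩
    rw [Set.mem_add]
    exact ⟨a, ha, -a, hmemT, by abel⟩
  refine ⟨hmain, ?_, ?_, hgap⟩
  · intro _
    have hy₀img : y₀ ∈ (fun z => shiftR z - z) '' cycleSet J :=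
      (Set.ext_iff.mp hmain y₀).mp hy₀mem
    rw [Set.mem_image] at hy₀img
    obtain ⟨z₀, hz₀, hz₀y⟩ := hy₀img
    rw [hmain]
    ext y
    simp only [Set.mem_image, Set.mem_singleton_iff]
    constructor
    · rintro ⟨z, hz, rfl⟩
      rw [← hz₀y]
      exact hgap z hz z₀ hz₀
    · rintro rfl
      exact ⟨z₀, hz₀, hz₀y⟩
  · intro hZ
    rw [hmain, hZ, Set.image_empty]
end
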